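/- Let n ≥ 4 and let A be a symmetric n×n real matrix, with associated algebraic curvature tensor R of rotationally symmetric type. If R is strictly PIC2, then R is a positive curvature operator; that is, for every nonzero antisymmetric n×n real matrix φ one has Σ_{i,j,k,l} R(e_i,e_j,e_k,e_l) φ_{ij} φ_{kl} > 0, where e_1,…,e_n is the standard basis of ℝⁿ. (This is the algebraic content of Lemma 2.3: a rotationally symmetric curvature tensor in the interior of the PIC2 cone lies in the cone of positive curvature operators.) -/

import Mathlib

open Matrix

private lemma rot3' {m : Type*} [Fintype m] (f : m → m → m → ℝ) :
    ∑ a : m, ∑ b : m, ∑ c : m, f a b c = ∑ c : m, ∑ a : m, ∑ b : m, f a b c := by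
  calc ∑ a : m, ∑ b : m, ∑ c : m, f a b c
      = ∑ a : m, ∑ c : m, ∑ b : m, f a b c :=
        Finset.sum_congr rfl fun a _ => Finset.sum_comm
    _ = ∑ c : m, ∑ a : m, ∑ b : m, f a b c := Finset.sum_comm

private lemma frame_lemma {n : ℕ} (w : Fin n → (Fin n → ℝ))
    (hdot : ∀ x y, w x ⬝ᵥ w y = if x = y then 1 else 0)
    (a b c d : Fin n) (hab : a ≠ b) (hac : a ≠ c) (had : a ≠ d) (hbc : b ≠ c) (hbd : b ≠ d)
    (hcd : c ≠ d) :
    (∀ i, (![w a, w c, w b, w d]) i ⬝ᵥ (![w a, w c, w b, w d]) i = 1) ∧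
    (∀ i j, i ≠ j → (![w a, w c, w b, w d]) i ⬝ᵥ (![w a, w c, w b, w d]) j = 0) := by
  constructor
  · intro i
    fin_cases i <;> simp [hdot]
  · intro i j hij
    fin_cases i <;> fin_cases j <;>
      simp_all [hdot, hab, hac, had, hbc, hbd, hcd, hab.symm, hac.symm, had.symm, hbc.symm,
        hbd.symm, hcd.symm]

/-- A rotationally symmetric algebraic curvature tensor (built from a
symmetric matrix `A`) that is strictly PIC2 is a positive curvature operator. -/
theorem rotationally_symmetric_strictly_PIC2_implies_positive_curvature_operator
    (n : ℕ) (hn : 4 ≤ n) (A : Matrix (Fin n) (Fin n) ℝ) (hA : A.IsSymm)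
    (R : (Fin n → ℝ) → (Fin n → ℝ) → (Fin n → ℝ) → (Fin n → ℝ) → ℝ)
    (hR : ∀ x y z w : Fin n → ℝ, R x y z w =
      (x ⬝ᵥ z) * ((A.mulVec y) ⬝ᵥ w) + (y ⬝ᵥ w) * ((A.mulVec x) ⬝ᵥ z)
        - (x ⬝ᵥ w) * ((A.mulVec y) ⬝ᵥ z) - (y ⬝ᵥ z) * ((A.mulVec x) ⬝ᵥ w))
    (hPIC2 : ∀ e : Fin 4 → (Fin n → ℝ),
      (∀ i, e i ⬝ᵥ e i = 1) → (∀ i j, i ≠ j → e i ⬝ᵥ e j = 0) →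
      ∀ lam mu : ℝ, lam ∈ Set.Icc (0:ℝ) 1 → mu ∈ Set.Icc (0:ℝ) 1 →
        0 < R (e 0) (e 2) (e 0) (e 2) + lam ^ 2 * R (e 0) (e 3) (e 0) (e 3)
            + mu ^ 2 * R (e 1) (e 2) (e 1) (e 2)
            + lam ^ 2 * mu ^ 2 * R (e 1) (e 3) (e 1) (e 3)
            - 2 * lam * mu * R (e 0) (e 1) (e 2) (e 3))
    (φ : Matrix (Fin n) (Fin n) ℝ) (hφ : φᵀ = -φ) (hφ0 : φ ≠ 0) :
    0 < ∑ i, ∑ j, ∑ k, ∑ l,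
      R (Pi.single i 1) (Pi.single j 1) (Pi.single k 1) (Pi.single l 1) * φ i j * φ k l := by
  have hA' : ∀ i j, A i j = A j i := fun i j => by
    have h := congrFun (congrFun hA j) i
    rwa [Matrix.transpose_apply] at h
  have hφ' : ∀ i j, φ j i = -φ i j := fun i j => by
    have h := congrFun (congrFun hφ i) j
    simpa using h
  -- Step A : the sum equals 4 * trace (A * (φᵀ * φ))
  have key : (∑ i, ∑ j, ∑ k, ∑ l,
      R (Pi.single i 1) (Pi.single j 1) (Pi.single k 1) (Pi.single l 1) * φ i j * φ k l)
      = 4 * trace (A * (φᵀ * φ)) := by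
    simp only [hR]
    simp only [dotProduct_single, mulVec_single, Pi.single_apply, mul_one, trace, Matrix.mul_apply,
      transpose_apply, diag_apply, MulOpposite.op_one, one_smul, Matrix.col_apply]
    simp only [add_mul, sub_mul, ite_mul, one_mul, zero_mul, mul_ite, mul_zero,
      Finset.sum_sub_distrib, Finset.sum_add_distrib, Finset.sum_ite_eq, Finset.sum_ite_eq',
      Finset.mem_univ, if_true, Finset.mul_sum, Finset.sum_mul]
    have collapse : ∀ (h : Fin n → Fin n → ℝ) (x : Fin n),
        (∑ x2 : Fin n, ∑ x3 : Fin n, if x2 = x then h x2 x3 else 0) = ∑ x3, h x x3 := by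
      intro h x
      rw [Finset.sum_comm]
      simp
    have c1 : ∀ x x1 : Fin n,
        (∑ x2 : Fin n, ∑ x3 : Fin n, if x2 = x then A x3 x1 * φ x x1 * φ x2 x3 else 0)
          = ∑ x3, A x3 x1 * φ x x1 * φ x x3 := fun x x1 => collapse _ x
    have c4 : ∀ x x1 : Fin n,
        (∑ x2 : Fin n, ∑ x3 : Fin n, if x2 = x1 then A x3 x * φ x x1 * φ x2 x3 else 0)
          = ∑ x3, A x3 x * φ x x1 * φ x1 x3 := fun x x1 => collapse _ x1
    simp only [c1, c4]
    have e1 : (∑ x : Fin n, ∑ x1 : Fin n, ∑ x3 : Fin n, A x3 x1 * φ x x1 * φ x x3)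
        = ∑ i, ∑ j, ∑ l, A j l * φ i j * φ i l :=
      Finset.sum_congr rfl fun x _ => Finset.sum_congr rfl fun j _ =>
        Finset.sum_congr rfl fun l _ => by rw [hA' l j]
    have e2 : (∑ x : Fin n, ∑ x1 : Fin n, ∑ x2 : Fin n, A x2 x * φ x x1 * φ x2 x1)
        = ∑ i, ∑ j, ∑ l, A j l * φ i j * φ i l := by
      rw [Finset.sum_comm]
      refine Finset.sum_congr rfl fun i _ => Finset.sum_congr rfl fun j _ =>
        Finset.sum_congr rfl fun l _ => ?_
      rw [hA' l j, hφ' i j, hφ' i l]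
      ring
    have e3 : (∑ x : Fin n, ∑ x1 : Fin n, ∑ x2 : Fin n, A x2 x1 * φ x x1 * φ x2 x)
        = -∑ i, ∑ j, ∑ l, A j l * φ i j * φ i l := by
      rw [← Finset.sum_neg_distrib]
      refine Finset.sum_congr rfl fun i _ => ?_
      rw [← Finset.sum_neg_distrib]
      refine Finset.sum_congr rfl fun j _ => ?_
      rw [← Finset.sum_neg_distrib]
      refine Finset.sum_congr rfl fun l _ => ?_
      rw [hA' l j, hφ' i l]
      ring
    have e4 : (∑ x : Fin n, ∑ x1 : Fin n, ∑ x3 : Fin n, A x3 x * φ x x1 * φ x1 x3)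
        = -∑ i, ∑ j, ∑ l, A j l * φ i j * φ i l := by
      rw [Finset.sum_comm, ← Finset.sum_neg_distrib]
      refine Finset.sum_congr rfl fun i _ => ?_
      rw [← Finset.sum_neg_distrib]
      refine Finset.sum_congr rfl fun j _ => ?_
      rw [← Finset.sum_neg_distrib]
      refine Finset.sum_congr rfl fun l _ => ?_
      rw [hA' l j, hφ' i j]
      ring
    have e5 : (∑ x : Fin n, ∑ x1 : Fin n, ∑ i : Fin n, 4 * (A x x1 * (φ i x1 * φ i x)))
        = 4 * ∑ i, ∑ j, ∑ l, A j l * φ i j * φ i l := by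
      rw [rot3' (fun x x1 i => 4 * (A x x1 * (φ i x1 * φ i x))), Finset.mul_sum]
      refine Finset.sum_congr rfl fun i _ => ?_
      rw [Finset.mul_sum, Finset.sum_comm]
      refine Finset.sum_congr rfl fun j _ => ?_
      rw [Finset.mul_sum]
      refine Finset.sum_congr rfl fun l _ => ?_
      rw [hA' l j]; ring
    rw [e1, e2, e3, e4, e5]
    ring
  rw [key]
  -- Step B: spectral decomposition
  have hAh : A.IsHermitian := by
    rw [Matrix.IsHermitian, Matrix.conjTranspose_eq_transpose_of_trivial, hA]
  set U : Matrix (Fin n) (Fin n) ℝ := (hAh.eigenvectorUnitary : Matrix (Fin n) (Fin n) ℝ) with hU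
  set μ : Fin n → ℝ := hAh.eigenvalues with hμ
  have hU1 : star U * U = 1 := Unitary.coe_star_mul_self hAh.eigenvectorUnitary
  have hU2 : U * star U = 1 := Unitary.coe_mul_star_self hAh.eigenvectorUnitary
  have hspec : A = U * diagonal μ * star U := by
    have h := hAh.spectral_theorem
    simpa [RCLike.ofReal_real_eq_id] using h
  set C : Matrix (Fin n) (Fin n) ℝ := star U * φ * U with hC
  have hsU : star U = Uᵀ := by
    rw [Matrix.star_eq_conjTranspose, Matrix.conjTranspose_eq_transpose_of_trivial]
  have hCanti : ∀ a b, C b a = - C a b := by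
    intro a b
    have h1 : Cᵀ = -C := by
      rw [hC, hsU, Matrix.transpose_mul, Matrix.transpose_mul, Matrix.transpose_transpose, hφ]
      noncomm_ring
    have h := congrFun (congrFun h1 a) b
    simpa using h
  have hφC : φ = U * C * star U := by
    rw [hC]
    calc φ = (U * star U) * φ * (U * star U) := by rw [hU2]; noncomm_ring
      _ = U * (star U * φ * U) * star U := by noncomm_ring
  have hC0 : C ≠ 0 := by
    intro h
    apply hφ0
    rw [hφC, h]
    simp
  -- Step C: trace computation
  have htr : trace (A * (φᵀ * φ)) = ∑ a, ∑ b, μ a * (C b a)^2 := by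
    have hφT : φᵀ = U * Cᵀ * star U := by
      rw [hφC, Matrix.transpose_mul, Matrix.transpose_mul, hsU, Matrix.transpose_transpose]
      noncomm_ring
    have hprod : A * (φᵀ * φ) = U * (diagonal μ * (Cᵀ * C)) * star U := by
      rw [hspec, hφT, hφC]
      calc U * diagonal μ * star U * (U * Cᵀ * star U * (U * C * star U))
          = U * diagonal μ * ((star U * U) * (Cᵀ * ((star U * U) * (C * star U)))) := by
            noncomm_ring
        _ = U * (diagonal μ * (Cᵀ * C)) * star U := by rw [hU1]; noncomm_ring
    rw [hprod, Matrix.trace_mul_comm, ← Matrix.mul_assoc, hU1, Matrix.one_mul]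
    simp only [trace, diag_apply, Matrix.mul_apply, Matrix.diagonal_apply, transpose_apply,
      ite_mul, zero_mul, Finset.sum_ite_eq, Finset.mem_univ, if_true]
    refine Finset.sum_congr rfl fun a _ => ?_
    rw [Finset.mul_sum]
    exact Finset.sum_congr rfl fun b _ => by ring
  rw [htr]
  -- Step D: eigenvalue pair positivity
  set w : Fin n → (Fin n → ℝ) := fun x => ⇑(hAh.eigenvectorBasis x) with hw
  have hdot : ∀ a b, w a ⬝ᵥ w b = if a = b then 1 else 0 := by
    intro a b
    have h := congrFun (congrFun hU1 a) b
    simp only [Matrix.mul_apply, Matrix.star_apply, Matrix.one_apply, star_trivial, hU,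
      Matrix.IsHermitian.eigenvectorUnitary_apply] at h
    simpa [dotProduct, hw] using h
  have hmulvec : ∀ x : Fin n, A *ᵥ w x = μ x • w x := fun x => hAh.mulVec_eigenvectorBasis x
  have key2 : ∀ a b : Fin n, a ≠ b → 0 < μ a + μ b := by
    intro a b hab
    have hcard : 1 < (Finset.univ \ {a, b} : Finset (Fin n)).card := by
      have h1 : (Finset.univ \ ({a, b} : Finset (Fin n))).card
          = n - ({a, b} : Finset (Fin n)).card := by
        rw [Finset.card_sdiff_of_subset (Finset.subset_univ _), Finset.card_univ, Fintype.card_fin]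
      have h2 : ({a, b} : Finset (Fin n)).card ≤ 2 :=
        (Finset.card_insert_le _ _).trans (by simp)
      omega
    obtain ⟨c, hc, d, hd, hcd⟩ := Finset.one_lt_card.mp hcard
    simp only [Finset.mem_sdiff, Finset.mem_insert, Finset.mem_singleton, not_or,
      Finset.mem_univ, true_and] at hc hd
    obtain ⟨horm1, horm2⟩ := frame_lemma w hdot a b c d hab (Ne.symm hc.1) (Ne.symm hd.1)
      (Ne.symm hc.2) (Ne.symm hd.2) hcd
    have hp := hPIC2 ![w a, w c, w b, w d] horm1 horm2 0 0
      ⟨le_refl 0, zero_le_one⟩ ⟨le_refl 0, zero_le_one⟩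
    have h0 : (![w a, w c, w b, w d]) (0 : Fin 4) = w a := rfl
    have h2 : (![w a, w c, w b, w d]) (2 : Fin 4) = w b := rfl
    rw [h0, h2] at hp
    norm_num at hp
    rw [hR, hmulvec a, hmulvec b, smul_dotProduct, smul_dotProduct, smul_dotProduct,
      smul_dotProduct] at hp
    simp [hdot, hab, Ne.symm hab] at hp
    linarith [hp]
  -- Step E: conclusion
  have hsq : ∀ a b : Fin n, (C b a)^2 = (C a b)^2 := fun a b => by rw [hCanti]; ring
  have hdiag : ∀ a : Fin n, C a a = 0 := fun a => by
    have h := hCanti a a; linarith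
  have hdouble : (∑ a, ∑ b, μ a * (C b a)^2) + (∑ a, ∑ b, μ a * (C b a)^2)
      = ∑ a, ∑ b, (μ a + μ b) * (C a b)^2 := by
    have h1 : (∑ a, ∑ b, μ a * (C b a)^2) = ∑ a, ∑ b, μ a * (C a b)^2 :=
      Finset.sum_congr rfl fun a _ => Finset.sum_congr rfl fun b _ => by rw [hsq]
    have h2 : (∑ a, ∑ b, μ a * (C b a)^2) = ∑ a, ∑ b, μ b * (C a b)^2 :=
      Finset.sum_comm
    calc (∑ a, ∑ b, μ a * (C b a)^2) + (∑ a, ∑ b, μ a * (C b a)^2)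
        = (∑ a, ∑ b, μ a * (C a b)^2) + ∑ a, ∑ b, μ b * (C a b)^2 := by rw [← h1, ← h2]
      _ = ∑ a, ∑ b, (μ a + μ b) * (C a b)^2 := by
          rw [← Finset.sum_add_distrib]
          refine Finset.sum_congr rfl fun a _ => ?_
          rw [← Finset.sum_add_distrib]
          exact Finset.sum_congr rfl fun b _ => by ring
  have hterm : ∀ a b : Fin n, 0 ≤ (μ a + μ b) * (C a b)^2 := by
    intro a b
    rcases eq_or_ne a b with h | h
    · subst h; rw [hdiag]; simp
    · exact mul_nonneg (key2 a b h).le (sq_nonneg _)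
  obtain ⟨a0, b0, hab0⟩ : ∃ a b, C a b ≠ 0 := by
    by_contra h
    push_neg at h
    exact hC0 (by ext a b; simpa using h a b)
  have ha0b0 : a0 ≠ b0 := fun h => hab0 (by rw [h]; exact hdiag b0)
  have hpos : 0 < ∑ a, ∑ b, (μ a + μ b) * (C a b)^2 := by
    apply Finset.sum_pos' (fun a _ => Finset.sum_nonneg fun b _ => hterm a b)
    refine ⟨a0, Finset.mem_univ _, Finset.sum_pos' (fun b _ => hterm a0 b) ?_⟩
    refine ⟨b0, Finset.mem_univ _, mul_pos (key2 a0 b0 ha0b0) ?_⟩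
    exact lt_of_le_of_ne (sq_nonneg _) (Ne.symm (pow_ne_zero 2 hab0))
  linarith [hpos, hdouble]
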